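/- Tensor contraction is associative in the following sense: if {A, B, C} is a tensor network (no index appears more than twice among A, B, C), then (A · B) · C = A · (B · C), and both equal the contraction of the tensor network {A, B, C}. -/

import Mathlib

open scoped Classical

noncomputable section

/-- A tensor over a finite set of indices `idx`, with domains `D i` for each index.
Values are given as a function of total assignments, depending only on `idx`. -/
structure Tensor (Ind : Type) (D : Ind → Type) where
  idx : Finset Ind
  val : (∀ i, D i) → ℝ
  depends : ∀ σ τ : (∀ i, D i), (∀ i ∈ idx, σ i = τ i) → val σ = val τ

namespace Tensor

variable {Ind : Type} {D : Ind → Type} [∀ i, Fintype (D i)]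

/-- Override a total assignment `σ` on the indices in `I` using `ρ`. -/
def override (σ : ∀ i, D i) {I : Finset Ind} (ρ : ∀ i : I, D i) : ∀ i, D i :=
  fun i => if h : i ∈ I then ρ ⟨i, h⟩ else σ i

/-- Number of tensors of the network `A` in which index `i` appears. -/
def count {κ : Type} [Fintype κ] (A : κ → Tensor Ind D) (i : Ind) : ℕ :=
  (Finset.univ.filter fun k => i ∈ (A k).idx).card

/-- A family of tensors is a tensor network if no index appears more than twice. -/
def IsNetwork {κ : Type} [Fintype κ] (A : κ → Tensor Ind D) : Prop :=
  ∀ i, count A i ≤ 2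

/-- Bond indices: appearing in exactly two tensors. -/
def bonds {κ : Type} [Fintype κ] (A : κ → Tensor Ind D) : Finset Ind :=
  (Finset.univ.biUnion fun k => (A k).idx).filter fun i => count A i = 2

/-- Free indices: appearing in exactly one tensor. -/
def frees {κ : Type} [Fintype κ] (A : κ → Tensor Ind D) : Finset Ind :=
  (Finset.univ.biUnion fun k => (A k).idx).filter fun i => count A i = 1

/-- The contraction of a tensor network, as a function of total assignments
(its value depends only on the free indices): sum over all assignments of the
bond indices of the product of the tensor entries. -/
def contract {κ : Type} [Fintype κ] (A : κ → Tensor Ind D) (σ : ∀ i, D i) : ℝ :=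
  ∑ ρ : ∀ i : (bonds A : Finset Ind), D i, ∏ k, (A k).val (override σ ρ)

end Tensor

/-- The binary contraction `A · B` of two tensors: indices are the symmetric
difference of the index sets, values sum over assignments of the shared indices. -/
def Tensor.binContract {Ind : Type} {D : Ind → Type} [∀ i, Fintype (D i)]
    (A B : Tensor Ind D) : Tensor Ind D where
  idx := (A.idx \ B.idx) ∪ (B.idx \ A.idx)
  val σ := ∑ ρ : ∀ i : (A.idx ∩ B.idx : Finset Ind), D i,
      A.val (Tensor.override σ ρ) * B.val (Tensor.override σ ρ)
  depends σ τ h := by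
    refine Finset.sum_congr rfl fun ρ _ => ?_
    have hA : A.val (Tensor.override σ ρ) = A.val (Tensor.override τ ρ) := by
      refine A.depends _ _ fun i hi => ?_
      unfold Tensor.override
      by_cases hI : i ∈ A.idx ∩ B.idx
      · simp [hI]
      · simp only [dif_neg hI]
        exact h i (Finset.mem_union.mpr (Or.inl (Finset.mem_sdiff.mpr
          ⟨hi, fun hB => hI (Finset.mem_inter.mpr ⟨hi, hB⟩)⟩)))
    have hB : B.val (Tensor.override σ ρ) = B.val (Tensor.override τ ρ) := by
      refine B.depends _ _ fun i hi => ?_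
      unfold Tensor.override
      by_cases hI : i ∈ A.idx ∩ B.idx
      · simp [hI]
      · simp only [dif_neg hI]
        exact h i (Finset.mem_union.mpr (Or.inr (Finset.mem_sdiff.mpr
          ⟨hi, fun hA' => hI (Finset.mem_inter.mpr ⟨hA', hi⟩)⟩)))
    rw [hA, hB]

section AuxAssoc

variable {Ind : Type} {D : Ind → Type} [∀ i, Fintype (D i)]

open Tensor

lemma Tensor.ext' {T S : Tensor Ind D} (h1 : T.idx = S.idx) (h2 : T.val = S.val) : T = S := by
  cases T; cases S
  dsimp at h1 h2
  subst h1; subst h2; rfl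

lemma override_apply_mem (σ : ∀ i, D i) {I : Finset Ind} (ρ : ∀ i : I, D i) {i : Ind}
    (h : i ∈ I) : override σ ρ i = ρ ⟨i, h⟩ := dif_pos h

lemma override_apply_not_mem (σ : ∀ i, D i) {I : Finset Ind} (ρ : ∀ i : I, D i) {i : Ind}
    (h : i ∉ I) : override σ ρ i = σ i := dif_neg h

lemma val_override_of_disjoint (T : Tensor Ind D) (σ : ∀ i, D i) {J : Finset Ind}
    (π : ∀ i : J, D i) (hd : Disjoint T.idx J) : T.val (override σ π) = T.val σ :=
  T.depends _ _ fun i hi => override_apply_not_mem _ _ (Finset.disjoint_left.mp hd hi)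

lemma override_override_comm (σ : ∀ i, D i) {I J : Finset Ind} (hd : Disjoint I J)
    (ρ : ∀ i : I, D i) (π : ∀ i : J, D i) :
    override (override σ π) ρ = override (override σ ρ) π := by
  funext i
  by_cases hI : i ∈ I
  · have hJ : i ∉ J := Finset.disjoint_left.mp hd hI
    simp [override, hI, hJ]
  · by_cases hJ : i ∈ J <;> simp [override, hI, hJ]

/-- Split an assignment on a disjoint union into a pair of assignments. -/
def splitEquiv (I J : Finset Ind) (hd : Disjoint I J) :
    ((∀ i : I, D i) × (∀ i : J, D i)) ≃ (∀ i : (I ∪ J : Finset Ind), D i) where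
  toFun p i := if h : (i : Ind) ∈ I then p.1 ⟨i, h⟩ else
    p.2 ⟨i, (Finset.mem_union.mp i.2).resolve_left h⟩
  invFun ρ := (fun i => ρ ⟨i, Finset.mem_union_left _ i.2⟩,
               fun i => ρ ⟨i, Finset.mem_union_right _ i.2⟩)
  left_inv p := by
    refine Prod.ext (funext fun i => ?_) (funext fun i => ?_)
    · exact dif_pos i.2
    · exact dif_neg fun h => Finset.disjoint_left.mp hd h i.2
  right_inv ρ := by
    funext i
    by_cases h : (i : Ind) ∈ I <;> simp [h]

lemma sum_override_split (σ : ∀ i, D i) (I J : Finset Ind) (hd : Disjoint I J)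
    (g : (∀ i, D i) → ℝ) :
    ∑ ρ : ∀ i : ((I ∪ J : Finset Ind) : Finset Ind), D i, g (override σ ρ)
      = ∑ ρI : ∀ i : I, D i, ∑ ρJ : ∀ i : J, D i, g (override (override σ ρJ) ρI) := by
  rw [← Equiv.sum_comp (splitEquiv I J hd) (fun ρ => g (override σ ρ)), Fintype.sum_prod_type]
  refine Finset.sum_congr rfl fun ρI _ => Finset.sum_congr rfl fun ρJ _ => ?_
  congr 1
  funext i
  by_cases hI : i ∈ I
  · rw [override_apply_mem _ _ (Finset.mem_union_left J hI),
      override_apply_mem _ _ hI]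
    simp [splitEquiv, hI]
  · by_cases hJ : i ∈ J
    · rw [override_apply_mem _ _ (Finset.mem_union_right I hJ),
        override_apply_not_mem _ _ hI, override_apply_mem _ _ hJ]
      simp [splitEquiv, hI]
    · rw [override_apply_not_mem _ _ (fun h => by
        rcases Finset.mem_union.mp h with h | h; exacts [hI h, hJ h]),
        override_apply_not_mem _ _ hI, override_apply_not_mem _ _ hJ]

lemma count_three (A B C : Tensor Ind D) (i : Ind) :
    Tensor.count ![A, B, C] i
      = (if i ∈ A.idx then 1 else 0) + (if i ∈ B.idx then 1 else 0)
        + (if i ∈ C.idx then 1 else 0) := by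
  unfold Tensor.count
  rw [Finset.card_filter, Fin.sum_univ_three]
  simp [Matrix.cons_val_zero, Matrix.cons_val_one, Matrix.head_cons]
  congr

/-- Normal form: sum over the three pairwise-shared index sets. -/
def triSum (A B C : Tensor Ind D) (σ : ∀ i, D i) : ℝ :=
  ∑ ρ1 : ∀ i : (A.idx ∩ B.idx : Finset Ind), D i,
  ∑ ρ2 : ∀ i : (A.idx ∩ C.idx : Finset Ind), D i,
  ∑ ρ3 : ∀ i : (B.idx ∩ C.idx : Finset Ind), D i,
    A.val (override (override (override σ ρ3) ρ2) ρ1) *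
      B.val (override (override (override σ ρ3) ρ2) ρ1) *
      C.val (override (override (override σ ρ3) ρ2) ρ1)

variable (A B C : Tensor Ind D)

lemma lhs_eq_triSum (htri : ∀ i, ¬(i ∈ A.idx ∧ i ∈ B.idx ∧ i ∈ C.idx)) (σ : ∀ i, D i) :
    (Tensor.binContract (Tensor.binContract A B) C).val σ = triSum A B C σ := by
  have d23 : Disjoint (A.idx ∩ C.idx) (B.idx ∩ C.idx) := by
    rw [Finset.disjoint_left]
    intro i hi hj
    simp only [Finset.mem_inter] at hi hj
    exact htri i ⟨hi.1, hj.1, hi.2⟩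
  have hC1 : Disjoint C.idx (A.idx ∩ B.idx) := by
    rw [Finset.disjoint_left]
    intro i hi hj
    simp only [Finset.mem_inter] at hj
    exact htri i ⟨hj.1, hj.2, hi⟩
  have hLC : ((A.idx \ B.idx ∪ B.idx \ A.idx) : Finset Ind) ∩ C.idx
      = (A.idx ∩ C.idx) ∪ (B.idx ∩ C.idx) := by
    ext i
    simp only [Finset.mem_inter, Finset.mem_union, Finset.mem_sdiff]
    have := htri i
    tauto
  calc (Tensor.binContract (Tensor.binContract A B) C).val σ
      = ∑ ρ : ∀ i : (((A.idx \ B.idx ∪ B.idx \ A.idx) ∩ C.idx : Finset Ind)), D i,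
          (∑ π : ∀ i : ((A.idx ∩ B.idx : Finset Ind)), D i,
            A.val (override (override σ ρ) π) * B.val (override (override σ ρ) π))
          * C.val (override σ ρ) := rfl
    _ = ∑ ρ : ∀ i : (((A.idx ∩ C.idx) ∪ (B.idx ∩ C.idx) : Finset Ind)), D i,
          (∑ π : ∀ i : ((A.idx ∩ B.idx : Finset Ind)), D i,
            A.val (override (override σ ρ) π) * B.val (override (override σ ρ) π))
          * C.val (override σ ρ) := by rw [hLC]
    _ = ∑ ρ2 : ∀ i : ((A.idx ∩ C.idx : Finset Ind)), D i,
        ∑ ρ3 : ∀ i : ((B.idx ∩ C.idx : Finset Ind)), D i,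
          (∑ π : ∀ i : ((A.idx ∩ B.idx : Finset Ind)), D i,
            A.val (override (override (override σ ρ3) ρ2) π)
              * B.val (override (override (override σ ρ3) ρ2) π))
          * C.val (override (override σ ρ3) ρ2) :=
        sum_override_split σ _ _ d23
          (fun τ => (∑ π : ∀ i : ((A.idx ∩ B.idx : Finset Ind)), D i,
            A.val (override τ π) * B.val (override τ π)) * C.val τ)
    _ = ∑ ρ2 : ∀ i : ((A.idx ∩ C.idx : Finset Ind)), D i,
        ∑ ρ3 : ∀ i : ((B.idx ∩ C.idx : Finset Ind)), D i,
        ∑ ρ1 : ∀ i : ((A.idx ∩ B.idx : Finset Ind)), D i,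
          A.val (override (override (override σ ρ3) ρ2) ρ1) *
            B.val (override (override (override σ ρ3) ρ2) ρ1) *
            C.val (override (override (override σ ρ3) ρ2) ρ1) := by
        refine Finset.sum_congr rfl fun ρ2 _ => Finset.sum_congr rfl fun ρ3 _ => ?_
        rw [Finset.sum_mul]
        refine Finset.sum_congr rfl fun ρ1 _ => ?_
        rw [val_override_of_disjoint C (override (override σ ρ3) ρ2) ρ1 hC1]
    _ = ∑ ρ2 : ∀ i : ((A.idx ∩ C.idx : Finset Ind)), D i,
        ∑ ρ1 : ∀ i : ((A.idx ∩ B.idx : Finset Ind)), D i,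
        ∑ ρ3 : ∀ i : ((B.idx ∩ C.idx : Finset Ind)), D i,
          A.val (override (override (override σ ρ3) ρ2) ρ1) *
            B.val (override (override (override σ ρ3) ρ2) ρ1) *
            C.val (override (override (override σ ρ3) ρ2) ρ1) :=
        Finset.sum_congr rfl fun ρ2 _ => Finset.sum_comm
    _ = triSum A B C σ := by rw [triSum, Finset.sum_comm]

lemma rhs_eq_triSum (htri : ∀ i, ¬(i ∈ A.idx ∧ i ∈ B.idx ∧ i ∈ C.idx)) (σ : ∀ i, D i) :
    (Tensor.binContract A (Tensor.binContract B C)).val σ = triSum A B C σ := by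
  have d12 : Disjoint (A.idx ∩ B.idx) (A.idx ∩ C.idx) := by
    rw [Finset.disjoint_left]
    intro i hi hj
    simp only [Finset.mem_inter] at hi hj
    exact htri i ⟨hi.1, hi.2, hj.2⟩
  have d31 : Disjoint (B.idx ∩ C.idx) (A.idx ∩ B.idx) := by
    rw [Finset.disjoint_left]
    intro i hi hj
    simp only [Finset.mem_inter] at hi hj
    exact htri i ⟨hj.1, hi.1, hi.2⟩
  have d32 : Disjoint (B.idx ∩ C.idx) (A.idx ∩ C.idx) := by
    rw [Finset.disjoint_left]
    intro i hi hj
    simp only [Finset.mem_inter] at hi hj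
    exact htri i ⟨hj.1, hi.1, hi.2⟩
  have hA3 : Disjoint A.idx (B.idx ∩ C.idx) := by
    rw [Finset.disjoint_left]
    intro i hi hj
    simp only [Finset.mem_inter] at hj
    exact htri i ⟨hi, hj.1, hj.2⟩
  have hRC : (A.idx ∩ (B.idx \ C.idx ∪ C.idx \ B.idx) : Finset Ind)
      = (A.idx ∩ B.idx) ∪ (A.idx ∩ C.idx) := by
    ext i
    simp only [Finset.mem_inter, Finset.mem_union, Finset.mem_sdiff]
    have := htri i
    tauto
  calc (Tensor.binContract A (Tensor.binContract B C)).val σ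
      = ∑ ρ : ∀ i : ((A.idx ∩ (B.idx \ C.idx ∪ C.idx \ B.idx) : Finset Ind)), D i,
          A.val (override σ ρ) *
          ∑ π : ∀ i : ((B.idx ∩ C.idx : Finset Ind)), D i,
            B.val (override (override σ ρ) π) * C.val (override (override σ ρ) π) := rfl
    _ = ∑ ρ : ∀ i : (((A.idx ∩ B.idx) ∪ (A.idx ∩ C.idx) : Finset Ind)), D i,
          A.val (override σ ρ) *
          ∑ π : ∀ i : ((B.idx ∩ C.idx : Finset Ind)), D i,
            B.val (override (override σ ρ) π) * C.val (override (override σ ρ) π) := by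
        rw [hRC]
    _ = ∑ ρ1 : ∀ i : ((A.idx ∩ B.idx : Finset Ind)), D i,
        ∑ ρ2 : ∀ i : ((A.idx ∩ C.idx : Finset Ind)), D i,
          A.val (override (override σ ρ2) ρ1) *
          ∑ π : ∀ i : ((B.idx ∩ C.idx : Finset Ind)), D i,
            B.val (override (override (override σ ρ2) ρ1) π)
              * C.val (override (override (override σ ρ2) ρ1) π) :=
        sum_override_split σ _ _ d12
          (fun τ => A.val τ * ∑ π : ∀ i : ((B.idx ∩ C.idx : Finset Ind)), D i,
            B.val (override τ π) * C.val (override τ π))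
    _ = triSum A B C σ := by
        rw [triSum]
        refine Finset.sum_congr rfl fun ρ1 _ => Finset.sum_congr rfl fun ρ2 _ => ?_
        rw [Finset.mul_sum]
        refine Finset.sum_congr rfl fun ρ3 _ => ?_
        have hbase : override (override (override σ ρ2) ρ1) ρ3
            = override (override (override σ ρ3) ρ2) ρ1 := by
          rw [override_override_comm (override σ ρ2) d31 ρ3 ρ1,
            override_override_comm σ d32 ρ3 ρ2]
        rw [hbase]
        have hA : A.val (override (override σ ρ2) ρ1)
            = A.val (override (override (override σ ρ3) ρ2) ρ1) := by
          rw [← hbase, val_override_of_disjoint A _ ρ3 hA3]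
        rw [hA, mul_assoc]

lemma contract_eq_triSum (htri : ∀ i, ¬(i ∈ A.idx ∧ i ∈ B.idx ∧ i ∈ C.idx)) (σ : ∀ i, D i) :
    Tensor.contract ![A, B, C] σ = triSum A B C σ := by
  have d23 : Disjoint (A.idx ∩ C.idx) (B.idx ∩ C.idx) := by
    rw [Finset.disjoint_left]
    intro i hi hj
    simp only [Finset.mem_inter] at hi hj
    exact htri i ⟨hi.1, hj.1, hi.2⟩
  have d1_23 : Disjoint (A.idx ∩ B.idx) ((A.idx ∩ C.idx) ∪ (B.idx ∩ C.idx)) := by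
    rw [Finset.disjoint_left]
    intro i hi hj
    simp only [Finset.mem_inter, Finset.mem_union] at hi hj
    rcases hj with hj | hj
    · exact htri i ⟨hi.1, hi.2, hj.2⟩
    · exact htri i ⟨hi.1, hi.2, hj.2⟩
  have hbi : (Finset.univ.biUnion fun k => ((![A, B, C]) k).idx)
      = A.idx ∪ B.idx ∪ C.idx := by
    ext i
    simp only [Finset.mem_biUnion, Finset.mem_univ, true_and, Finset.mem_union]
    constructor
    · rintro ⟨k, hk⟩
      fin_cases k <;> simp_all
    · rintro ((h | h) | h)
      exacts [⟨0, h⟩, ⟨1, h⟩, ⟨2, h⟩]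
  have hbonds : Tensor.bonds ![A, B, C]
      = (A.idx ∩ B.idx) ∪ ((A.idx ∩ C.idx) ∪ (B.idx ∩ C.idx)) := by
    unfold Tensor.bonds
    rw [hbi]
    ext i
    have ht := htri i
    simp only [Finset.mem_filter, Finset.mem_union, Finset.mem_inter, count_three]
    by_cases h1 : i ∈ A.idx <;> by_cases h2 : i ∈ B.idx <;> by_cases h3 : i ∈ C.idx <;>
      simp [h1, h2, h3] <;> tauto
  calc Tensor.contract ![A, B, C] σ
      = ∑ ρ : ∀ i : ((Tensor.bonds ![A, B, C] : Finset Ind)), D i,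
          ∏ k, ((![A, B, C]) k).val (override σ ρ) := rfl
    _ = ∑ ρ : ∀ i : (((A.idx ∩ B.idx) ∪ ((A.idx ∩ C.idx) ∪ (B.idx ∩ C.idx)) : Finset Ind)), D i,
          ∏ k, ((![A, B, C]) k).val (override σ ρ) := by rw [hbonds]
    _ = ∑ ρ1 : ∀ i : ((A.idx ∩ B.idx : Finset Ind)), D i,
        ∑ ρ : ∀ i : (((A.idx ∩ C.idx) ∪ (B.idx ∩ C.idx) : Finset Ind)), D i,
          ∏ k, ((![A, B, C]) k).val (override (override σ ρ) ρ1) :=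
        sum_override_split σ _ _ d1_23
          (fun τ => ∏ k, ((![A, B, C]) k).val τ)
    _ = ∑ ρ1 : ∀ i : ((A.idx ∩ B.idx : Finset Ind)), D i,
        ∑ ρ2 : ∀ i : ((A.idx ∩ C.idx : Finset Ind)), D i,
        ∑ ρ3 : ∀ i : ((B.idx ∩ C.idx : Finset Ind)), D i,
          ∏ k, ((![A, B, C]) k).val (override (override (override σ ρ3) ρ2) ρ1) :=
        Finset.sum_congr rfl fun ρ1 _ =>
          sum_override_split σ _ _ d23
            (fun τ => ∏ k, ((![A, B, C]) k).val (override τ ρ1))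
    _ = triSum A B C σ := by
        rw [triSum]
        refine Finset.sum_congr rfl fun ρ1 _ => Finset.sum_congr rfl fun ρ2 _ =>
          Finset.sum_congr rfl fun ρ3 _ => ?_
        rw [Fin.prod_univ_three]
        simp

end AuxAssoc

/-- binary tensor contraction is associative on tensor networks: if
`{A, B, C}` is a tensor network (no index appears more than twice), then
`(A · B) · C = A · (B · C)` and both equal the contraction of the network `{A, B, C}`
(whose index set is the set of free indices). -/
theorem binContract_assoc
    {Ind : Type} {D : Ind → Type} [∀ i, Fintype (D i)]
    (A B C : Tensor Ind D)
    (hnet : Tensor.IsNetwork ![A, B, C]) :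
    Tensor.binContract (Tensor.binContract A B) C
        = Tensor.binContract A (Tensor.binContract B C)
      ∧ (Tensor.binContract (Tensor.binContract A B) C).idx = Tensor.frees ![A, B, C]
      ∧ ∀ σ : ∀ i, D i,
          (Tensor.binContract (Tensor.binContract A B) C).val σ
            = Tensor.contract ![A, B, C] σ := by
  have htri : ∀ i, ¬(i ∈ A.idx ∧ i ∈ B.idx ∧ i ∈ C.idx) := by
    rintro i ⟨h1, h2, h3⟩
    have h := hnet i
    rw [count_three] at h
    simp [h1, h2, h3] at h
  have hbi : (Finset.univ.biUnion fun k => ((![A, B, C]) k).idx)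
      = A.idx ∪ B.idx ∪ C.idx := by
    ext i
    simp only [Finset.mem_biUnion, Finset.mem_univ, true_and, Finset.mem_union]
    constructor
    · rintro ⟨k, hk⟩
      fin_cases k <;> simp_all
    · rintro ((h | h) | h)
      exacts [⟨0, h⟩, ⟨1, h⟩, ⟨2, h⟩]
  have hidx2 : (Tensor.binContract (Tensor.binContract A B) C).idx
      = Tensor.frees ![A, B, C] := by
    show ((A.idx \ B.idx ∪ B.idx \ A.idx) \ C.idx)
        ∪ (C.idx \ (A.idx \ B.idx ∪ B.idx \ A.idx)) = _
    unfold Tensor.frees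
    rw [hbi]
    ext i
    have ht := htri i
    simp only [Finset.mem_filter, Finset.mem_union, Finset.mem_sdiff, count_three]
    by_cases h1 : i ∈ A.idx <;> by_cases h2 : i ∈ B.idx <;> by_cases h3 : i ∈ C.idx <;>
      simp [h1, h2, h3] <;> tauto
  have hidx1 : (Tensor.binContract (Tensor.binContract A B) C).idx
      = (Tensor.binContract A (Tensor.binContract B C)).idx := by
    show ((A.idx \ B.idx ∪ B.idx \ A.idx) \ C.idx)
        ∪ (C.idx \ (A.idx \ B.idx ∪ B.idx \ A.idx))
      = (A.idx \ (B.idx \ C.idx ∪ C.idx \ B.idx))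
        ∪ ((B.idx \ C.idx ∪ C.idx \ B.idx) \ A.idx)
    ext i
    simp only [Finset.mem_union, Finset.mem_sdiff]
    tauto
  exact ⟨Tensor.ext' hidx1 (funext fun σ =>
      (lhs_eq_triSum A B C htri σ).trans (rhs_eq_triSum A B C htri σ).symm),
    hidx2, fun σ =>
      (lhs_eq_triSum A B C htri σ).trans (contract_eq_triSum A B C htri σ).symm⟩
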